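/- arXiv:2510.01709 — 2 statements merged into one kernel-verified Lean document; each statement's English description precedes it below -/
import Mathlib

section
/- Let A: R^{m×n} → R^l be a linear map, b ∈ R^l, 0 ≤ r ≤ n ≤ m, f(X) := Σ_{i=n-r+1}^{n} σ_i(X)^2 + (1/2)‖A(X) − b‖^2, and let V ∈ E(X), i.e. V^T V = I_{n-r} and ‖XV‖_F^2 = Σ_{i=n-r+1}^n σ_i(X)^2. Then ‖∇_V g(X,V)‖_F ≤ 2 f(X), where g(X,V) = ‖XV‖_F^2 + (1/2)‖A(X) − b‖^2 and ∇_V g(X,V) = 2X^T X V. -/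
open Matrix Finset Filter Topology Pointwise

noncomputable section

namespace RankEB

/-- Squared Frobenius norm of a matrix. -/
def frob2 {a b : ℕ} (M : Matrix (Fin a) (Fin b) ℝ) : ℝ := ∑ i, ∑ j, (M i j) ^ 2

/-- Frobenius norm of a matrix. -/
def frob {a b : ℕ} (M : Matrix (Fin a) (Fin b) ℝ) : ℝ := Real.sqrt (frob2 M)

/-- Trace inner product of matrices. -/
def minner {a b : ℕ} (A B : Matrix (Fin a) (Fin b) ℝ) : ℝ := ∑ i, ∑ j, A i j * B i j

/-- Squared Euclidean norm on `ℝ^l`. -/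
def enorm2 {l : ℕ} (v : Fin l → ℝ) : ℝ := ∑ i, (v i) ^ 2

/-- Singular values of a real matrix, in nonincreasing order:
`sVal X i = sqrt` of the `i`-th largest eigenvalue of `Xᵀ X`. -/
def sVal {m n : ℕ} (X : Matrix (Fin m) (Fin n) ℝ) (i : Fin n) : ℝ :=
  Real.sqrt ((Matrix.isHermitian_conjTranspose_mul_self X).eigenvalues
    (Tuple.sort (Matrix.isHermitian_conjTranspose_mul_self X).eigenvalues i.rev))

/-- Sum of the squares of the `n - r` smallest singular values of `X`,
i.e. `∑_{i=r+1}^{n} σ_i(X)^2` (1-indexed with `σ₁ ≥ ⋯ ≥ σₙ`). -/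
def tailSum {m n : ℕ} (r : ℕ) (X : Matrix (Fin m) (Fin n) ℝ) : ℝ :=
  ∑ i ∈ Finset.univ.filter (fun i : Fin n => r ≤ (i : ℕ)), (sVal X i) ^ 2

/-! ### Auxiliary lemmas -/

lemma cardA {n k : ℕ} (hk : k ≤ n) :
    (Finset.univ.filter (fun i : Fin n => (i : ℕ) < k)).card = k := by
  rw [Finset.card_filter, Fin.sum_univ_eq_sum_range (fun i => if i < k then 1 else 0) n,
    ← Finset.sum_filter]
  have : (Finset.range n).filter (fun i => i < k) = Finset.range k := by
    ext x; simp; omega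
  rw [this]; simp

/-- Key scalar inequality: if `0 ≤ t ≤ 1` with `∑ t = k`, `μ` monotone nonnegative, and
`∑ μ t` equals the sum of the `k` smallest values of `μ`, then `∑ μ² t ≤ (∑ μ t)²`. -/
lemma key {n k : ℕ} (hk : k ≤ n) (μ t : Fin n → ℝ) (hμ : Monotone μ)
    (hμ0 : ∀ i, 0 ≤ μ i) (ht0 : ∀ i, 0 ≤ t i) (ht1 : ∀ i, t i ≤ 1)
    (hts : ∑ i, t i = (k : ℝ))
    (heq : ∑ i, μ i * t i = ∑ i ∈ Finset.univ.filter (fun i : Fin n => (i : ℕ) < k), μ i) :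
    ∑ i, (μ i)^2 * t i ≤ (∑ i ∈ Finset.univ.filter (fun i : Fin n => (i : ℕ) < k), μ i)^2 := by
  set A := Finset.univ.filter (fun i : Fin n => (i : ℕ) < k) with hA
  set S := ∑ i ∈ A, μ i with hS
  rcases Nat.eq_zero_or_pos k with hk0 | hkpos
  · subst hk0
    have : ∀ i ∈ (Finset.univ : Finset (Fin n)), t i = 0 := by
      rw [← Finset.sum_eq_zero_iff_of_nonneg (fun i _ => ht0 i)]
      simpa using hts
    have hz : ∑ i, (μ i)^2 * t i = 0 :=
      Finset.sum_eq_zero fun i hi => by rw [this i hi, mul_zero]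
    rw [hz]; positivity
  · have hkn : k - 1 < n := by omega
    set c := μ ⟨k - 1, hkn⟩ with hc
    have hcA : (⟨k - 1, hkn⟩ : Fin n) ∈ A :=
      Finset.mem_filter.mpr ⟨Finset.mem_univ _, by show k - 1 < k; omega⟩
    have hc0 : 0 ≤ c := hμ0 _
    have hcS : c ≤ S := Finset.single_le_sum (fun i _ => hμ0 i) hcA
    have hS0 : 0 ≤ S := le_trans hc0 hcS
    have hcard : A.card = k := cardA hk
    have hle : ∀ i ∈ A, μ i ≤ c := by
      intro i hi
      rw [hA, Finset.mem_filter] at hi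
      exact hμ (Fin.le_def.mpr (by show (i:ℕ) ≤ k - 1; omega))
    have hge : ∀ i ∈ Finset.univ.filter (fun i : Fin n => ¬ (i : ℕ) < k), c ≤ μ i := by
      intro i hi
      rw [Finset.mem_filter] at hi
      exact hμ (Fin.le_def.mpr (by show k - 1 ≤ (i:ℕ); omega))
    have hsplit : ∑ i ∈ A, (μ i - c) * t i
        + ∑ i ∈ Finset.univ.filter (fun i : Fin n => ¬ (i : ℕ) < k), (μ i - c) * t i
        = S - c * k := by
      rw [hA, Finset.sum_filter_add_sum_filter_not]
      have h5 : ∑ i, (μ i - c) * t i = (∑ i, μ i * t i) - c * ∑ i, t i := by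
        rw [Finset.mul_sum, ← Finset.sum_sub_distrib]; congr 1; ext i; ring
      rw [h5, heq, hts]
    have h1 : ∑ i ∈ A, (μ i - c) ≤ ∑ i ∈ A, (μ i - c) * t i := by
      apply Finset.sum_le_sum
      intro i hi
      nlinarith [hle i hi, ht1 i, ht0 i]
    have hAeq : ∑ i ∈ A, (μ i - c) = S - c * k := by
      rw [Finset.sum_sub_distrib, ← hS, Finset.sum_const, hcard]
      simp [nsmul_eq_mul]; ring
    have h2 : ∑ i ∈ Finset.univ.filter (fun i : Fin n => ¬ (i : ℕ) < k), (μ i - c) * t i ≤ 0 := by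
      linarith
    have h3 : ∀ i ∈ Finset.univ.filter (fun i : Fin n => ¬ (i : ℕ) < k), (μ i - c) * t i = 0 := by
      rw [← Finset.sum_eq_zero_iff_of_nonneg]
      · exact le_antisymm h2 (Finset.sum_nonneg fun i hi =>
          mul_nonneg (by linarith [hge i hi]) (ht0 i))
      · exact fun i hi => mul_nonneg (by linarith [hge i hi]) (ht0 i)
    have hterm : ∀ i ∈ (Finset.univ : Finset (Fin n)), (μ i)^2 * t i ≤ c * (μ i * t i) := by
      intro i _
      by_cases hik : (i : ℕ) < k
      · have hi1 := hle i (Finset.mem_filter.mpr ⟨Finset.mem_univ _, hik⟩)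
        nlinarith [mul_nonneg (mul_nonneg (sub_nonneg.mpr hi1) (hμ0 i)) (ht0 i)]
      · have h0 := h3 i (Finset.mem_filter.mpr ⟨Finset.mem_univ _, hik⟩)
        have h6 : μ i * ((μ i - c) * t i) = 0 := by rw [h0, mul_zero]
        nlinarith [h6]
    calc ∑ i, (μ i)^2 * t i ≤ ∑ i, c * (μ i * t i) := Finset.sum_le_sum hterm
      _ = c * ∑ i, μ i * t i := by rw [Finset.mul_sum]
      _ = c * S := by rw [heq]
      _ ≤ S * S := mul_le_mul_of_nonneg_right hcS hS0
      _ = S^2 := (sq S).symm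

lemma conjT_eq {p q : ℕ} (M : Matrix (Fin p) (Fin q) ℝ) : Mᴴ = Mᵀ := by
  ext i j; simp [conjTranspose_apply]

lemma frob2_eq_trace {a b : ℕ} (M : Matrix (Fin a) (Fin b) ℝ) :
    frob2 M = (Mᴴ * M).trace := by
  simp only [frob2, trace, Matrix.diag, mul_apply, conjTranspose_apply, star_trivial]
  rw [Finset.sum_comm]
  congr 1; ext i; congr 1; ext j; ring

lemma trace_diag_form {n k : ℕ} (d : Fin n → ℝ) (W : Matrix (Fin n) (Fin k) ℝ) :
    (Wᴴ * (Matrix.diagonal d * W)).trace = ∑ i, d i * ∑ c, (W i c)^2 := by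
  simp only [trace, Matrix.diag, mul_apply, conjTranspose_apply, star_trivial,
    diagonal_apply, ite_mul, zero_mul, Finset.sum_ite_eq, Finset.mem_univ, if_true]
  rw [Finset.sum_comm]
  congr 1; ext i
  rw [Finset.mul_sum]
  congr 1; ext c; ring

lemma frob2_nonneg {a b : ℕ} (M : Matrix (Fin a) (Fin b) ℝ) : 0 ≤ frob2 M := by
  unfold frob2; positivity

lemma frob2_smul {a b : ℕ} (c : ℝ) (M : Matrix (Fin a) (Fin b) ℝ) :
    frob2 (c • M) = c^2 * frob2 M := by
  simp only [frob2, Matrix.smul_apply, smul_eq_mul, mul_pow, Finset.mul_sum]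

/-- for `V ∈ E(X)`, the `V`-gradient of
`g(X,V) = ‖XV‖_F² + (1/2)‖A(X)-b‖²`, namely `2XᵀXV`, satisfies `‖∇_V g(X,V)‖_F ≤ 2 f(X)`. -/
theorem stmt5 (m n r l : ℕ) (hmn : n ≤ m) (hr : r ≤ n)
    (A : Matrix (Fin m) (Fin n) ℝ →ₗ[ℝ] (Fin l → ℝ)) (b : Fin l → ℝ)
    (X : Matrix (Fin m) (Fin n) ℝ) (V : Matrix (Fin n) (Fin (n - r)) ℝ)
    (hV : Vᵀ * V = 1) (hE : frob2 (X * V) = tailSum r X) :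
    frob ((2 : ℝ) • (Xᵀ * X * V)) ≤
      2 * (tailSum r X + (1 / 2) * enorm2 (A X - b)) := by
  have hH := Matrix.isHermitian_conjTranspose_mul_self X
  set ev : Fin n → ℝ := hH.eigenvalues with hev
  have hPSD : (Xᵀ * X).PosSemidef := by
    have := Matrix.posSemidef_conjTranspose_mul_self X
    rwa [conjT_eq] at this
  have hev0 : ∀ i, 0 ≤ ev i := fun i => hPSD.eigenvalues_nonneg i
  set U : Matrix (Fin n) (Fin n) ℝ := (hH.eigenvectorUnitary : Matrix (Fin n) (Fin n) ℝ) with hUdef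
  have hU1 : Uᴴ * U = 1 := by
    rw [← star_eq_conjTranspose]
    exact Unitary.star_mul_self_of_mem hH.eigenvectorUnitary.property
  have hU2 : U * Uᴴ = 1 := by
    rw [← star_eq_conjTranspose]
    exact Unitary.mul_star_self_of_mem hH.eigenvectorUnitary.property
  have hspec : Xᵀ * X = U * diagonal ev * Uᴴ := by
    have h := hH.spectral_theorem
    rw [Unitary.conjStarAlgAut_apply, star_eq_conjTranspose] at h
    rw [← conjT_eq X]
    exact h
  set W : Matrix (Fin n) (Fin (n - r)) ℝ := Uᴴ * V with hWdef
  set s : Fin n → ℝ := fun i => ∑ c, (W i c)^2 with hsdef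
  have hWH : Wᴴ = Vᴴ * U := by
    rw [hWdef, conjTranspose_mul, conjTranspose_conjTranspose]
  have hWW : Wᴴ * W = 1 := by
    rw [hWH, hWdef, Matrix.mul_assoc, ← Matrix.mul_assoc U, hU2, Matrix.one_mul,
      conjT_eq, hV]
  -- the three trace identities
  have e1 : frob2 (X * V) = ∑ i, ev i * s i := by
    rw [frob2_eq_trace]
    have h9 : (X * V)ᴴ * (X * V) = Wᴴ * (diagonal ev * W) := by
      rw [conjTranspose_mul, conjT_eq X, Matrix.mul_assoc, ← Matrix.mul_assoc Xᵀ X V,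
        hspec, hWH, hWdef]
      simp only [Matrix.mul_assoc]
    rw [h9, trace_diag_form]
  have e2 : frob2 ((Xᵀ * X) * V) = ∑ i, (ev i)^2 * s i := by
    rw [frob2_eq_trace]
    have h10 : ((Xᵀ * X) * V)ᴴ * ((Xᵀ * X) * V)
        = Wᴴ * (diagonal (fun i => ev i * ev i) * W) := by
      rw [conjTranspose_mul, hPSD.1, hspec, hWH, hWdef, ← Matrix.diagonal_mul_diagonal]
      simp only [Matrix.mul_assoc]
      rw [← Matrix.mul_assoc Uᴴ U, hU1, Matrix.one_mul]
    rw [h10, trace_diag_form]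
    exact Finset.sum_congr rfl fun i _ => by ring
  have e3 : ∑ i, s i = ((n - r : ℕ) : ℝ) := by
    have h11 : ∑ i, s i = frob2 W := rfl
    rw [h11, frob2_eq_trace, hWW, Matrix.trace_one]
    simp
  have e4 : ∀ i, s i ≤ 1 := by
    intro i
    set P : Matrix (Fin n) (Fin n) ℝ := W * Wᴴ with hPdef
    have hPsymm : ∀ a c, P c a = P a c := by
      intro a c
      have : Pᴴ = P := by rw [hPdef, conjTranspose_mul, conjTranspose_conjTranspose]
      have h := congrFun (congrFun this a) c
      simpa [conjTranspose_apply] using h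
    have hPP : P * P = P := by
      rw [hPdef, Matrix.mul_assoc, ← Matrix.mul_assoc Wᴴ W, hWW, Matrix.one_mul]
    have hsP : s i = P i i := by
      simp [hsdef, hPdef, mul_apply, conjTranspose_apply, sq]
    have h11 : P i i = ∑ j, (P i j)^2 := by
      conv_lhs => rw [← hPP]
      rw [mul_apply]
      exact Finset.sum_congr rfl fun j _ => by rw [hPsymm i j, sq]
    have h12 : (P i i)^2 ≤ P i i := by
      have h12' : (P i i)^2 ≤ ∑ j, (P i j)^2 :=
        Finset.single_le_sum (f := fun j => (P i j)^2)
          (fun j _ => sq_nonneg _) (Finset.mem_univ i)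
      rwa [← h11] at h12'
    have h13 : 0 ≤ P i i := by
      rw [h11]; exact Finset.sum_nonneg fun j _ => sq_nonneg _
    rw [hsP]; nlinarith [h12, h13]
  have e5 : ∀ i, 0 ≤ s i := fun i => Finset.sum_nonneg fun c _ => sq_nonneg _
  -- sorting
  set σ : Equiv.Perm (Fin n) := Tuple.sort ev with hσ
  set μ : Fin n → ℝ := fun j => ev (σ j) with hμdef
  have hμmono : Monotone μ := Tuple.monotone_sort ev
  have htail : tailSum r X
      = ∑ j ∈ Finset.univ.filter (fun j : Fin n => (j : ℕ) < n - r), μ j := by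
    unfold tailSum
    refine Finset.sum_nbij' (fun i : Fin n => i.rev) (fun j : Fin n => j.rev)
      ?_ ?_ ?_ ?_ ?_
    · intro a ha
      rw [Finset.mem_filter] at ha ⊢
      refine ⟨Finset.mem_univ _, ?_⟩
      rw [Fin.val_rev]
      have := a.isLt
      omega
    · intro a ha
      rw [Finset.mem_filter] at ha ⊢
      refine ⟨Finset.mem_univ _, ?_⟩
      rw [Fin.val_rev]
      have := a.isLt
      omega
    · intro a _; exact Fin.rev_rev a
    · intro a _; exact Fin.rev_rev a
    · intro a _
      show (sVal X a)^2 = μ a.rev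
      unfold sVal
      exact Real.sq_sqrt (hev0 _)
  have hks : n - r ≤ n := Nat.sub_le n r
  have hsum1 : ∑ j, s (σ j) = ∑ i, s i := Equiv.sum_comp σ s
  have hsum2 : ∑ j, μ j * s (σ j) = ∑ i, ev i * s i :=
    Equiv.sum_comp σ (fun i => ev i * s i)
  have hsum3 : ∑ j, (μ j)^2 * s (σ j) = ∑ i, (ev i)^2 * s i :=
    Equiv.sum_comp σ (fun i => (ev i)^2 * s i)
  have happ := key hks μ (fun j => s (σ j)) hμmono (fun j => hev0 _)
    (fun j => e5 _) (fun j => e4 _)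
    (by rw [hsum1, e3])
    (by rw [hsum2, ← e1, hE, htail])
  rw [hsum3, ← e2, ← htail] at happ
  -- conclude
  have htS0 : 0 ≤ tailSum r X := by rw [← hE]; exact frob2_nonneg _
  have henorm : 0 ≤ enorm2 (A X - b) := Finset.sum_nonneg fun i _ => sq_nonneg _
  have hfr : frob ((2 : ℝ) • (Xᵀ * X * V)) = 2 * Real.sqrt (frob2 (Xᵀ * X * V)) := by
    unfold frob
    rw [frob2_smul]
    rw [show ((2:ℝ)^2 = 4) by norm_num, show (4:ℝ) = 2^2 by norm_num,
      Real.sqrt_mul (by positivity), Real.sqrt_sq (by norm_num)]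
  rw [hfr]
  have hsq : Real.sqrt (frob2 (Xᵀ * X * V)) ≤ tailSum r X := by
    calc Real.sqrt (frob2 (Xᵀ * X * V)) ≤ Real.sqrt ((tailSum r X)^2) :=
          Real.sqrt_le_sqrt happ
      _ = tailSum r X := Real.sqrt_sq htS0
  linarith

end RankEB
end
end

section
/- Let f: R^d → [0, ∞) be lower semicontinuous with zero set S = f^{-1}(0) nonempty. Assume there exist c > 0, R > 0 such that m_f(x) := dist(0, ∂f(x)) ≥ c for all ‖x‖ ≥ R, and that near each point of S a Łojasiewicz-type inequality m_f(x) ≥ c' f(x)^{1−τ} holds (τ ∈ (0,1]). Then S is compact and there exists C > 0 such that C·dist(x, S) ≤ f(x)^τ + f(x) for all x ∈ R^d. -/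
open Filter Topology

noncomputable section

namespace RankEB

def FSubE {d : ℕ} (f : EuclideanSpace ℝ (Fin d) → ℝ) (x v : EuclideanSpace ℝ (Fin d)) : Prop :=
  ∀ ε > (0:ℝ), ∃ δ > (0:ℝ), ∀ y, ‖y - x‖ < δ →
    f y - f x - (inner ℝ v (y - x) : ℝ) ≥ -(ε * ‖y - x‖)

def LSubE {d : ℕ} (f : EuclideanSpace ℝ (Fin d) → ℝ) (x v : EuclideanSpace ℝ (Fin d)) : Prop :=
  ∃ xs vs : ℕ → EuclideanSpace ℝ (Fin d),
    (∀ k, FSubE f (xs k) (vs k)) ∧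
    Filter.Tendsto xs Filter.atTop (nhds x) ∧
    Filter.Tendsto (fun k => f (xs k)) Filter.atTop (nhds (f x)) ∧
    Filter.Tendsto vs Filter.atTop (nhds v)

def slopeE {d : ℕ} (f : EuclideanSpace ℝ (Fin d) → ℝ) (x : EuclideanSpace ℝ (Fin d)) : ℝ :=
  sInf {t | ∃ v, LSubE f x v ∧ t = ‖v‖}

variable {d : ℕ} {f : EuclideanSpace ℝ (Fin d) → ℝ}

lemma FSubE.lsub {x v : EuclideanSpace ℝ (Fin d)} (h : FSubE f x v) : LSubE f x v :=
  ⟨fun _ => x, fun _ => v, fun _ => h, tendsto_const_nhds, tendsto_const_nhds,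
    tendsto_const_nhds⟩

lemma slopeE_le {x v : EuclideanSpace ℝ (Fin d)} (h : FSubE f x v) : slopeE f x ≤ ‖v‖ := by
  apply csInf_le
  · refine ⟨0, ?_⟩
    rintro t ⟨w, -, rfl⟩
    positivity
  · exact ⟨v, h.lsub, rfl⟩

/-- At a local minimum, `0` is a Fréchet subgradient, hence the slope is `≤ 0`. -/
lemma slopeE_nonpos_of_localmin {x : EuclideanSpace ℝ (Fin d)} (ρ : ℝ) (hρ : 0 < ρ)
    (h : ∀ y, ‖y - x‖ < ρ → f x ≤ f y) : slopeE f x ≤ 0 := by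
  have h0 : FSubE f x 0 := by
    intro ε hε
    refine ⟨ρ, hρ, fun y hy => ?_⟩
    have := h y hy
    simp only [inner_zero_left]
    nlinarith [norm_nonneg (y - x), mul_nonneg hε.le (norm_nonneg (y - x))]
  simpa using slopeE_le h0

/-- A lower semicontinuous function bounded below attains its minimum on a
nonempty compact set. -/
lemma lsc_min_on_compact {g : EuclideanSpace ℝ (Fin d) → ℝ} (hg : LowerSemicontinuous g)
    {K : Set (EuclideanSpace ℝ (Fin d))} (hK : IsCompact K) (hne : K.Nonempty)
    (hb : ∀ w ∈ K, 0 ≤ g w) : ∃ z ∈ K, ∀ w ∈ K, g z ≤ g w := by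
  have hbdd : BddBelow (g '' K) := ⟨0, by rintro t ⟨w, hw, rfl⟩; exact hb w hw⟩
  have hneim : (g '' K).Nonempty := hne.image g
  set m := sInf (g '' K) with hm
  set C : ℕ → Set (EuclideanSpace ℝ (Fin d)) := fun n => K ∩ {z | g z ≤ m + 1/(n+1)} with hC
  have hCne : ∀ n, (C n).Nonempty := by
    intro n
    have hpos : m < m + 1/(n+1) := by
      have : (0:ℝ) < 1/(n+1) := by positivity
      linarith
    obtain ⟨t, ⟨w, hw, rfl⟩, hlt⟩ := (csInf_lt_iff hbdd hneim).mp hpos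
    exact ⟨w, hw, hlt.le⟩
  have hCclosed : ∀ n, IsClosed (C n) := fun n =>
    hK.isClosed.inter (hg.isClosed_preimage _)
  have hCcompact : ∀ n, IsCompact (C n) := fun n =>
    hK.of_isClosed_subset (hCclosed n) Set.inter_subset_left
  have hmono : ∀ n, C (n+1) ⊆ C n := by
    intro n z hz
    refine ⟨hz.1, ?_⟩
    have h2 : g z ≤ m + 1/((n+1:ℕ)+1) := hz.2
    have : (1:ℝ)/(n+1+1) ≤ 1/(n+1) := by
      apply one_div_le_one_div_of_le
      · positivity
      · push_cast; linarith
    show g z ≤ m + 1/(n+1)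
    push_cast at h2 ⊢
    linarith
  obtain ⟨z, hz⟩ := IsCompact.nonempty_iInter_of_sequence_nonempty_isCompact_isClosed
    C hmono hCne (hCcompact 0) hCclosed
  simp only [Set.mem_iInter] at hz
  refine ⟨z, (hz 0).1, fun w hw => ?_⟩
  have h1 : g z ≤ m := by
    have : ∀ n : ℕ, g z ≤ m + 1/(n+1) := fun n => (hz n).2
    have hlim : Tendsto (fun n : ℕ => m + 1/(n+1:ℝ)) atTop (nhds m) := by
      have : Tendsto (fun n : ℕ => 1/(n+1:ℝ)) atTop (nhds 0) :=
        tendsto_one_div_add_atTop_nhds_zero_nat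
      simpa using tendsto_const_nhds.add this
    exact ge_of_tendsto hlim (Filter.Eventually.of_forall this)
  exact h1.trans (csInf_le hbdd ⟨w, hw, rfl⟩)

/-- If `z` is a local minimizer of `f + m·√(‖·-x₀‖² + δ²)`, then `f` has a Fréchet
subgradient of norm `< m` at `z`. -/
lemma penalty_subgrad (x₀ z : EuclideanSpace ℝ (Fin d)) (m δc ρ : ℝ)
    (hm : 0 < m) (hδ : 0 < δc) (hρ : 0 < ρ)
    (hmin : ∀ w, ‖w - z‖ < ρ →
      f z + m * Real.sqrt (‖z - x₀‖^2 + δc^2) ≤ f w + m * Real.sqrt (‖w - x₀‖^2 + δc^2)) :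
    ∃ v, FSubE f z v ∧ ‖v‖ < m := by
  set s : ℝ := Real.sqrt (‖z - x₀‖^2 + δc^2) with hs
  have hspos : 0 < s := Real.sqrt_pos.mpr (by positivity)
  have hssq : s^2 = ‖z - x₀‖^2 + δc^2 := Real.sq_sqrt (by positivity)
  have hnlt : ‖z - x₀‖ < s := by
    rw [hs]
    rw [show (‖z - x₀‖^2 + δc^2) = ‖z - x₀‖^2 + δc^2 from rfl]
    have : ‖z - x₀‖^2 < ‖z - x₀‖^2 + δc^2 := by nlinarith
    exact (Real.lt_sqrt (norm_nonneg _)).mpr this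
  refine ⟨-(m/s) • (z - x₀), ?_, ?_⟩
  · intro ε hε
    refine ⟨min ρ (2*s*ε/m), by positivity, fun w hw => ?_⟩
    have hwρ : ‖w - z‖ < ρ := lt_of_lt_of_le hw (min_le_left _ _)
    have hwε : ‖w - z‖ ≤ 2*s*ε/m := le_of_lt (lt_of_lt_of_le hw (min_le_right _ _))
    set sw : ℝ := Real.sqrt (‖w - x₀‖^2 + δc^2) with hsw
    have hswnn : 0 ≤ sw := Real.sqrt_nonneg _
    have hswsq : sw^2 = ‖w - x₀‖^2 + δc^2 := Real.sq_sqrt (by positivity)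
    have hdec : ‖w - x₀‖^2 = ‖w - z‖^2 + 2 * (inner ℝ (w - z) (z - x₀) : ℝ) + ‖z - x₀‖^2 := by
      have := @norm_add_sq_real (EuclideanSpace ℝ (Fin d)) _ _ (w - z) (z - x₀)
      rw [show (w - z) + (z - x₀) = w - x₀ by abel] at this
      linarith [this]
    -- AM-GM : sw ≤ (s² + sw²)/(2s)
    have hamgm : sw ≤ (s^2 + sw^2) / (2*s) := by
      rw [le_div_iff₀ (by positivity)]
      nlinarith [sq_nonneg (s - sw)]
    have hkey : f w - f z ≥ m * (s - sw) := by
      have := hmin w hwρ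
      rw [← hsw] at this
      linarith
    have hinner : (inner ℝ (-(m/s) • (z - x₀)) (w - z) : ℝ)
        = -(m/s) * (inner ℝ (w - z) (z - x₀) : ℝ) := by
      rw [real_inner_smul_left, real_inner_comm]
    rw [hinner]
    have hsub : s - sw ≥ -(2 * (inner ℝ (w - z) (z - x₀) : ℝ) + ‖w - z‖^2) / (2*s) := by
      have h1 : sw ≤ s + (sw^2 - s^2)/(2*s) := by
        have : (s^2 + sw^2)/(2*s) = s + (sw^2 - s^2)/(2*s) := by field_simp; ring
        linarith [hamgm, this.symm.le]
      have h2 : sw^2 - s^2 = 2 * (inner ℝ (w - z) (z - x₀) : ℝ) + ‖w - z‖^2 := by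
        rw [hswsq, hssq, hdec]; ring
      rw [h2] at h1
      rw [neg_div]
      linarith
    have hmain : f w - f z - (-(m/s) * (inner ℝ (w - z) (z - x₀) : ℝ))
        ≥ - (m * ‖w - z‖^2 / (2*s)) := by
      have h3 : m * (s - sw) ≥ m * (-(2 * (inner ℝ (w - z) (z - x₀) : ℝ) + ‖w - z‖^2) / (2*s)) :=
        mul_le_mul_of_nonneg_left hsub hm.le
      have h4 : m * (-(2 * (inner ℝ (w - z) (z - x₀) : ℝ) + ‖w - z‖^2) / (2*s))
          = -(m/s) * (inner ℝ (w - z) (z - x₀) : ℝ) - m * ‖w - z‖^2 / (2*s) := by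
        field_simp; ring
      rw [h4] at h3
      linarith [hkey, h3]
    have hfinal : m * ‖w - z‖^2 / (2*s) ≤ ε * ‖w - z‖ := by
      have hm1 : ‖w - z‖ * m ≤ 2*s*ε := by
        rw [le_div_iff₀ hm] at hwε
        linarith
      rw [div_le_iff₀ (by positivity : (0:ℝ) < 2*s)]
      nlinarith [norm_nonneg (w - z)]
    linarith
  · rw [norm_smul]
    simp only [norm_neg, Real.norm_eq_abs]
    rw [abs_of_pos (by positivity : (0:ℝ) < m/s)]
    calc m/s * ‖z - x₀‖ < m/s * s := by
          apply mul_lt_mul_of_pos_left hnlt (by positivity)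
      _ = m := by field_simp

lemma le_of_le_add_inv {a b : ℝ} (h : ∀ n : ℕ, a ≤ b + 1/(n+1)) : a ≤ b := by
  have hlim : Tendsto (fun n : ℕ => b + 1/(n+1:ℝ)) atTop (nhds b) := by
    have : Tendsto (fun n : ℕ => 1/(n+1:ℝ)) atTop (nhds 0) :=
      tendsto_one_div_add_atTop_nhds_zero_nat
    simpa using tendsto_const_nhds.add this
  exact ge_of_tendsto hlim (Filter.Eventually.of_forall h)

/-- Main descent lemma: if the slope is at least `m` on the part of the ball
`closedBall x₀ r` where `s < f ≤ f x₀`, and `f x₀ - s < m r`, then one can find a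
point `z` with `f z ≤ s` at distance at most `f x₀ / m` from `x₀`. -/
lemma descent (hfnn : ∀ x, 0 ≤ f x) (hlsc : LowerSemicontinuous f)
    (x₀ : EuclideanSpace ℝ (Fin d)) (m s r : ℝ) (hm : 0 < m) (hs : 0 ≤ s)
    (hr : f x₀ - s < m * r)
    (hyp : ∀ y, dist y x₀ ≤ r → s < f y → f y ≤ f x₀ → m ≤ slopeE f y) :
    ∃ z, f z ≤ s ∧ dist z x₀ ≤ f x₀ / m := by
  rcases le_or_gt (f x₀) s with hfs | hfs
  · exact ⟨x₀, hfs, by rw [dist_self]; exact div_nonneg (hfnn x₀) hm.le⟩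
  -- now s < f x₀, so r > 0
  have hrpos : 0 < r := by
    by_contra hcon
    push_neg at hcon
    nlinarith
  -- step for each admissible δ
  have key : ∀ δ : ℝ, 0 < δ → (f x₀ - s)/m + δ < r →
      ∃ z, f z ≤ s ∧ dist z x₀ ≤ f x₀/m + δ := by
    intro δ hδ hδr
    set h : EuclideanSpace ℝ (Fin d) → ℝ := fun w => m * Real.sqrt (‖w - x₀‖^2 + δ^2)
      with hh
    have hcont : Continuous h := by
      apply continuous_const.mul
      apply Continuous.sqrt
      exact ((continuous_id.sub continuous_const).norm.pow 2).add continuous_const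
    have hglsc : LowerSemicontinuous (fun w => f w + h w) :=
      hlsc.add hcont.lowerSemicontinuous
    obtain ⟨z, hzK, hzmin⟩ := lsc_min_on_compact hglsc (isCompact_closedBall x₀ r)
      ⟨x₀, Metric.mem_closedBall_self hrpos.le⟩
      (fun w _ => by
        have : 0 ≤ h w := by positivity
        linarith [hfnn w])
    have hgx₀ : f x₀ + h x₀ = f x₀ + m * δ := by
      simp only [hh, sub_self, norm_zero]
      rw [show (0:ℝ)^2 + δ^2 = δ^2 by ring, Real.sqrt_sq hδ.le]
    have hle : f z + h z ≤ f x₀ + m * δ := by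
      rw [← hgx₀]
      exact hzmin x₀ (Metric.mem_closedBall_self hrpos.le)
    have hsqge : δ ≤ Real.sqrt (‖z - x₀‖^2 + δ^2) := by
      apply Real.le_sqrt_of_sq_le
      nlinarith [sq_nonneg ‖z - x₀‖]
    have hfz : f z ≤ f x₀ := by
      have : m * δ ≤ h z := by
        have := mul_le_mul_of_nonneg_left hsqge hm.le
        simpa [hh] using this
      linarith
    have hdistz : ‖z - x₀‖ ≤ Real.sqrt (‖z - x₀‖^2 + δ^2) := by
      apply Real.le_sqrt_of_sq_le
      nlinarith [sq_nonneg δ]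
    rcases le_or_gt (f z) s with hzs | hzs
    · refine ⟨z, hzs, ?_⟩
      have h1 : m * ‖z - x₀‖ ≤ f x₀ + m * δ - f z := by
        have := mul_le_mul_of_nonneg_left hdistz hm.le
        simp only [hh] at hle
        linarith
      rw [dist_eq_norm]
      rw [div_add' _ _ _ hm.ne', le_div_iff₀ hm]
      nlinarith [hfnn z]
    · exfalso
      -- z is an interior local minimizer with s < f z
      have hint : ‖z - x₀‖ < r := by
        have h1 : m * ‖z - x₀‖ ≤ f x₀ + m * δ - f z := by
          have := mul_le_mul_of_nonneg_left hdistz hm.le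
          simp only [hh] at hle
          linarith
        have h2 : ‖z - x₀‖ ≤ (f x₀ - f z)/m + δ := by
          rw [div_add' _ _ _ hm.ne', le_div_iff₀ hm]
          linarith
        have h3 : (f x₀ - f z)/m ≤ (f x₀ - s)/m := by
          gcongr
        calc ‖z - x₀‖ ≤ (f x₀ - f z)/m + δ := h2
          _ ≤ (f x₀ - s)/m + δ := by linarith
          _ < r := hδr
      obtain ⟨v, hv, hvm⟩ := penalty_subgrad x₀ z m δ (r - ‖z - x₀‖) hm hδ
        (by linarith) (fun w hw => by
          apply hzmin
          rw [Metric.mem_closedBall, dist_eq_norm]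
          have : ‖w - x₀‖ ≤ ‖w - z‖ + ‖z - x₀‖ := norm_sub_le_norm_sub_add_norm_sub w z x₀
          linarith)
      have hslope : slopeE f z ≤ ‖v‖ := slopeE_le hv
      have := hyp z (by rw [dist_eq_norm]; linarith) hzs hfz
      linarith
  -- remove δ by nested compact sets
  set δ₀ : ℝ := (r - (f x₀ - s)/m)/2 with hδ₀
  have hδ₀pos : 0 < δ₀ := by
    have : (f x₀ - s)/m < r := by
      rw [div_lt_iff₀ hm]; linarith
    simp only [hδ₀]; linarith
  set C : ℕ → Set (EuclideanSpace ℝ (Fin d)) :=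
    fun n => Metric.closedBall x₀ (f x₀/m + min δ₀ (1/(n+1))) ∩ {z | f z ≤ s} with hC
  have hCne : ∀ n, (C n).Nonempty := by
    intro n
    have hp : (0:ℝ) < min δ₀ (1/(n+1)) := lt_min hδ₀pos (by positivity)
    obtain ⟨z, hz1, hz2⟩ := key (min δ₀ (1/(n+1))) hp
      (by
        have : min δ₀ (1/(n+1:ℝ)) ≤ δ₀ := min_le_left _ _
        simp only [hδ₀] at this ⊢
        linarith)
    exact ⟨z, Metric.mem_closedBall.mpr hz2, hz1⟩
  have hCclosed : ∀ n, IsClosed (C n) :=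
    fun n => Metric.isClosed_closedBall.inter (hlsc.isClosed_preimage _)
  have hCcompact : IsCompact (C 0) :=
    (isCompact_closedBall _ _).of_isClosed_subset (hCclosed 0) Set.inter_subset_left
  have hmono : ∀ n, C (n+1) ⊆ C n := by
    intro n z hz
    refine ⟨?_, hz.2⟩
    have h1 := Metric.mem_closedBall.mp hz.1
    apply Metric.mem_closedBall.mpr
    have : min δ₀ (1/((n+1:ℕ)+1:ℝ)) ≤ min δ₀ (1/(n+1:ℝ)) := by
      apply min_le_min le_rfl
      apply one_div_le_one_div_of_le
      · positivity
      · push_cast; linarith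
    push_cast at h1 this ⊢
    linarith
  obtain ⟨z, hz⟩ := IsCompact.nonempty_iInter_of_sequence_nonempty_isCompact_isClosed
    C hmono hCne hCcompact hCclosed
  simp only [Set.mem_iInter] at hz
  refine ⟨z, (hz 0).2, ?_⟩
  apply le_of_le_add_inv
  intro n
  have := Metric.mem_closedBall.mp (hz n).1
  have hmin : min δ₀ (1/(n+1:ℝ)) ≤ 1/(n+1:ℝ) := min_le_right _ _
  linarith


/-- Hölder error bound via telescoping descent, on the region `0 < f < μ`
where the Łojasiewicz inequality holds globally. -/
lemma holder_bound (hfnn : ∀ x, 0 ≤ f x) (hlsc : LowerSemicontinuous f)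
    (S : Set (EuclideanSpace ℝ (Fin d))) (hS : S = f ⁻¹' {0})
    (c₁ μ τ : ℝ) (hc₁ : 0 < c₁) (hμ : 0 < μ) (hτ0 : 0 < τ) (hτ1 : τ ≤ 1)
    (hslope : ∀ y, 0 < f y → f y < μ → c₁ * f y ^ (1-τ) ≤ slopeE f y)
    (x : EuclideanSpace ℝ (Fin d)) (hx0 : 0 < f x) (hxμ : f x < μ) :
    Metric.infDist x S ≤
      2 * (2:ℝ)^(-τ) / (c₁ * (1 - (2:ℝ)^(-τ))) * (f x)^τ := by
  set t : ℝ := f x with ht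
  set q : ℝ := (2:ℝ)^(-τ) with hq
  have hq0 : 0 < q := Real.rpow_pos_of_pos (by norm_num) _
  have hq1 : q < 1 := Real.rpow_lt_one_of_one_lt_of_neg (by norm_num) (by linarith)
  -- geometric series bound
  have hgeom : ∀ k : ℕ, (∑ j ∈ Finset.range k, q^(j+1)) ≤ q / (1 - q) := by
    intro k
    have h1 : (∑ j ∈ Finset.range k, q^(j+1)) = q * ∑ j ∈ Finset.range k, q^j := by
      rw [Finset.mul_sum]
      apply Finset.sum_congr rfl
      intro j _
      ring
    have h2 : (∑ j ∈ Finset.range k, q^j) ≤ 1 / (1 - q) := by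
      rw [geom_sum_eq (by intro h; rw [h] at hq1; linarith : q ≠ 1)]
      have e : (q^k - 1)/(q - 1) = (1 - q^k)/(1 - q) := by
        rw [div_eq_div_iff (by linarith) (by linarith)]; ring
      rw [e, div_le_div_iff₀ (by linarith) (by linarith)]
      nlinarith [pow_nonneg hq0.le k]
    rw [h1, div_eq_mul_one_div q (1-q)]
    exact mul_le_mul_of_nonneg_left h2 hq0.le
  -- key identity : (t/2^(k+1))^τ = t^τ * q^(k+1)
  have hpow : ∀ k : ℕ, (t/2^(k+1))^τ = t^τ * q^(k+1) := by
    intro k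
    rw [Real.div_rpow hx0.le (by positivity)]
    rw [hq, ← Real.rpow_natCast ((2:ℝ)^(-τ)) (k+1), ← Real.rpow_natCast (2:ℝ) (k+1),
      ← Real.rpow_mul (by norm_num : (0:ℝ) ≤ 2), ← Real.rpow_mul (by norm_num : (0:ℝ) ≤ 2)]
    rw [div_eq_mul_inv, ← Real.rpow_neg (by norm_num : (0:ℝ) ≤ 2)]
    ring_nf
  -- telescoping induction
  have claim : ∀ k : ℕ, ∃ z, f z ≤ t/2^k ∧
      dist z x ≤ (2 * t^τ / c₁) * ∑ j ∈ Finset.range k, q^(j+1) := by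
    intro k
    induction k with
    | zero => exact ⟨x, by simp [ht], by simp⟩
    | succ k ih =>
      obtain ⟨z, hz1, hz2⟩ := ih
      rcases le_or_gt (f z) (t/2^(k+1)) with hcase | hcase
      · refine ⟨z, hcase, le_trans hz2 ?_⟩
        apply mul_le_mul_of_nonneg_left ?_ (by positivity)
        rw [Finset.sum_range_succ]
        nlinarith [pow_pos hq0 (k+1)]
      · -- apply descent
        set sk : ℝ := t/2^(k+1) with hsk
        have hskpos : 0 < sk := by positivity
        set mk : ℝ := c₁ * sk^(1-τ) with hmk
        have hmkpos : 0 < mk := by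
          apply mul_pos hc₁ (Real.rpow_pos_of_pos hskpos _)
        have htk : t/2^k = 2 * sk := by
          rw [hsk]; field_simp; ring
        obtain ⟨z', hz'1, hz'2⟩ := descent hfnn hlsc z mk sk ((f z - sk)/mk + 1)
          hmkpos hskpos.le
          (by
            rw [mul_add, mul_div_cancel₀ _ hmkpos.ne']
            linarith)
          (by
            intro y _ hy1 hy2
            have hyμ : f y < μ := by
              have h2k : (1:ℝ) ≤ 2^k := one_le_pow₀ (by norm_num)
              have : t/2^k ≤ t := by
                rw [div_le_iff₀ (by positivity)]
                nlinarith [hx0.le]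
              linarith
            have hy0 : 0 < f y := lt_trans hskpos hy1
            have := hslope y hy0 hyμ
            have hmono : sk^(1-τ) ≤ f y^(1-τ) :=
              Real.rpow_le_rpow hskpos.le hy1.le (by linarith)
            calc mk = c₁ * sk^(1-τ) := hmk
              _ ≤ c₁ * f y^(1-τ) := by
                  exact mul_le_mul_of_nonneg_left hmono hc₁.le
              _ ≤ slopeE f y := this)
        refine ⟨z', hz'1, ?_⟩
        have hstep : dist z' z ≤ (2 * t^τ / c₁) * q^(k+1) := by
          have h1 : f z / mk ≤ 2 * sk / mk := by
            gcongr
            · linarith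
          have hsplit : sk^(1-τ) * sk^τ = sk := by
            rw [← Real.rpow_add hskpos]; norm_num
          have h2 : 2 * sk / mk = (2/c₁) * sk^τ := by
            rw [div_eq_iff hmkpos.ne', hmk]
            have e : (2/c₁) * sk^τ * (c₁ * sk^(1-τ)) = 2 * (sk^(1-τ) * sk^τ) := by
              field_simp
            rw [e, hsplit]
          have h3 : sk^τ = t^τ * q^(k+1) := hpow k
          calc dist z' z ≤ f z / mk := hz'2
            _ ≤ 2 * sk / mk := h1
            _ = (2/c₁) * sk^τ := h2
            _ = (2/c₁) * (t^τ * q^(k+1)) := by rw [h3]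
            _ = (2 * t^τ / c₁) * q^(k+1) := by ring
        calc dist z' x ≤ dist z' z + dist z x := dist_triangle z' z x
          _ ≤ (2 * t^τ / c₁) * q^(k+1) + (2 * t^τ / c₁) * ∑ j ∈ Finset.range k, q^(j+1) := by
              linarith
          _ = (2 * t^τ / c₁) * ∑ j ∈ Finset.range (k+1), q^(j+1) := by
              rw [Finset.sum_range_succ]; ring
  -- all iterates stay in a fixed ball
  set B₀ : ℝ := (2 * t^τ / c₁) * (q/(1-q)) with hB₀
  have hB₀nn : 0 ≤ B₀ := by
    apply mul_nonneg (by positivity)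
    apply div_nonneg hq0.le (by linarith)
  have claim' : ∀ k : ℕ, ∃ z, f z ≤ t/2^k ∧ dist z x ≤ B₀ := by
    intro k
    obtain ⟨z, h1, h2⟩ := claim k
    refine ⟨z, h1, le_trans h2 ?_⟩
    exact mul_le_mul_of_nonneg_left (hgeom k) (by positivity)
  -- nested compact sets
  set D : ℕ → Set (EuclideanSpace ℝ (Fin d)) :=
    fun k => Metric.closedBall x B₀ ∩ {z | f z ≤ t/2^k} with hD
  have hDne : ∀ k, (D k).Nonempty := by
    intro k
    obtain ⟨z, h1, h2⟩ := claim' k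
    exact ⟨z, Metric.mem_closedBall.mpr h2, h1⟩
  have hDclosed : ∀ k, IsClosed (D k) :=
    fun k => Metric.isClosed_closedBall.inter (hlsc.isClosed_preimage _)
  have hDcompact : IsCompact (D 0) :=
    (isCompact_closedBall _ _).of_isClosed_subset (hDclosed 0) Set.inter_subset_left
  have hDmono : ∀ k, D (k+1) ⊆ D k := by
    intro k z hz
    refine ⟨hz.1, ?_⟩
    have h1 : f z ≤ t/2^(k+1) := hz.2
    have : t/2^(k+1) ≤ t/2^k := by
      rw [div_le_div_iff₀ (by positivity) (by positivity)]
      have h2k : (0:ℝ) ≤ 2^k := by positivity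
      have : (2:ℝ)^(k+1) = 2*2^k := by ring
      nlinarith [hx0.le]
    exact le_trans h1 this
  obtain ⟨z, hz⟩ := IsCompact.nonempty_iInter_of_sequence_nonempty_isCompact_isClosed
    D hDmono hDne hDcompact hDclosed
  simp only [Set.mem_iInter] at hz
  have hfz : f z = 0 := by
    have h1 : ∀ k : ℕ, f z ≤ t/2^k := fun k => (hz k).2
    have hlim : Tendsto (fun k : ℕ => t/2^k) atTop (nhds 0) := by
      simp only [div_eq_mul_inv, ← inv_pow]
      have := tendsto_pow_atTop_nhds_zero_of_lt_one
        (by norm_num : (0:ℝ) ≤ (2:ℝ)⁻¹) (by norm_num : (2:ℝ)⁻¹ < 1)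
      simpa using tendsto_const_nhds.mul this
    have : f z ≤ 0 := ge_of_tendsto hlim (Filter.Eventually.of_forall h1)
    linarith [hfnn z]
  have hzS : z ∈ S := by rw [hS]; exact hfz
  have hidd : Metric.infDist x S ≤ dist x z := Metric.infDist_le_dist_of_mem hzS
  have hdb : dist x z ≤ B₀ := by
    rw [dist_comm]
    exact Metric.mem_closedBall.mp (hz 0).1
  calc Metric.infDist x S ≤ dist x z := hidd
    _ ≤ B₀ := hdb
    _ = 2 * q / (c₁ * (1-q)) * t^τ := by
        rw [hB₀]; field_simp


/-- global error bound: if the slope `m_f` is bounded below at infinity and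
a local Łojasiewicz inequality holds near the zero set `S = f⁻¹(0)`, then `S` is compact
and a global Hölderian error bound `C · dist(x,S) ≤ f(x)^τ + f(x)` holds. -/
theorem stmt19 (d : ℕ) (f : EuclideanSpace ℝ (Fin d) → ℝ)
    (hfnn : ∀ x, 0 ≤ f x) (hlsc : LowerSemicontinuous f)
    (S : Set (EuclideanSpace ℝ (Fin d))) (hS : S = f ⁻¹' {0}) (hSne : S.Nonempty)
    (τ : ℝ) (hτ0 : 0 < τ) (hτ1 : τ ≤ 1)
    (hcoer : ∃ c > (0:ℝ), ∃ R > (0:ℝ), ∀ x, R ≤ ‖x‖ → c ≤ slopeE f x)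
    (hloc : ∀ xbar ∈ S, ∃ c' > (0:ℝ), ∃ ε > (0:ℝ), ∀ x, ‖x - xbar‖ < ε →
      c' * f x ^ (1 - τ) ≤ slopeE f x) :
    IsCompact S ∧ ∃ C > (0:ℝ), ∀ x, C * Metric.infDist x S ≤ f x ^ τ + f x := by
  obtain ⟨c, hc, R, hR, hcoer'⟩ := hcoer
  -- S is closed
  have hSclosed : IsClosed S := by
    have hSeq : S = f ⁻¹' Set.Iic 0 := by
      rw [hS]; ext y
      simp only [Set.mem_preimage, Set.mem_singleton_iff, Set.mem_Iic]
      constructor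
      · intro h; linarith
      · intro h; linarith [hfnn y]
    rw [hSeq]; exact hlsc.isClosed_preimage 0
  -- the slope vanishes on S
  have hslopeS : ∀ xbar ∈ S, slopeE f xbar ≤ 0 := by
    intro xbar hxbar
    have hf0 : f xbar = 0 := by rw [hS] at hxbar; exact hxbar
    apply slopeE_nonpos_of_localmin 1 one_pos
    intro y _
    rw [hf0]; exact hfnn y
  -- S is bounded, hence compact
  have hSsub : S ⊆ Metric.closedBall 0 R := by
    intro xbar hxbar
    rw [Metric.mem_closedBall, dist_zero_right]
    by_contra hcon
    push_neg at hcon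
    have := hcoer' xbar hcon.le
    linarith [hslopeS xbar hxbar]
  have hScompact : IsCompact S :=
    (isCompact_closedBall 0 R).of_isClosed_subset hSclosed hSsub
  refine ⟨hScompact, ?_⟩
  -- τ = 1 is impossible
  rcases eq_or_lt_of_le hτ1 with hτeq | hτlt
  · exfalso
    obtain ⟨xbar, hxbar⟩ := hSne
    obtain ⟨c', hc', ε, hε, H⟩ := hloc xbar hxbar
    have h1 := H xbar (by rw [sub_self, norm_zero]; exact hε)
    have hf0 : f xbar = 0 := by rw [hS] at hxbar; exact hxbar
    rw [hf0, hτeq, sub_self, Real.rpow_zero, mul_one] at h1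
    linarith [hslopeS xbar hxbar]
  -- uniform local Łojasiewicz constants near S
  choose c' hc'pos ε hεpos H using fun p : S => hloc p.1 p.2
  have hcover : S ⊆ ⋃ p : S, Metric.ball (p : EuclideanSpace ℝ (Fin d)) (ε p / 2) := by
    intro y hy
    exact Set.mem_iUnion.mpr ⟨⟨y, hy⟩, Metric.mem_ball_self (by have := hεpos ⟨y, hy⟩; linarith)⟩
  obtain ⟨t, ht⟩ := hScompact.elim_finite_subcover
    (fun p : S => Metric.ball (p : EuclideanSpace ℝ (Fin d)) (ε p / 2))
    (fun p => Metric.isOpen_ball) hcover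
  have htne : t.Nonempty := by
    rcases t.eq_empty_or_nonempty with h | h
    · exfalso
      obtain ⟨xbar, hxbar⟩ := hSne
      have := ht hxbar
      rw [h] at this
      simpa using this
    · exact h
  set c₀ : ℝ := t.inf' htne c' with hc₀
  set ε₀ : ℝ := t.inf' htne (fun p => ε p / 2) with hε₀
  have hc₀pos : 0 < c₀ := by
    rw [hc₀, Finset.lt_inf'_iff]
    exact fun p _ => hc'pos p
  have hε₀pos : 0 < ε₀ := by
    rw [hε₀, Finset.lt_inf'_iff]
    intro p _
    have := hεpos p
    positivity
  have hunif : ∀ y, Metric.infDist y S < ε₀ → c₀ * f y ^ (1-τ) ≤ slopeE f y := by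
    intro y hy
    obtain ⟨s', hs'S, hds'⟩ := (Metric.infDist_lt_iff hSne).mp hy
    obtain ⟨p, hpt, hps'⟩ := Set.mem_iUnion₂.mp (ht hs'S)
    have hεp : ε₀ ≤ ε p / 2 := Finset.inf'_le _ hpt
    have hcp : c₀ ≤ c' p := Finset.inf'_le _ hpt
    have hdyp : ‖y - (p : EuclideanSpace ℝ (Fin d))‖ < ε p := by
      rw [← dist_eq_norm]
      calc dist y (p : EuclideanSpace ℝ (Fin d)) ≤ dist y s' + dist s' p := dist_triangle _ _ _
        _ < ε₀ + ε p / 2 := by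
            have := Metric.mem_ball.mp hps'
            linarith
        _ ≤ ε p / 2 + ε p / 2 := by linarith
        _ = ε p := by ring
    calc c₀ * f y ^ (1-τ) ≤ c' p * f y ^ (1-τ) := by
          apply mul_le_mul_of_nonneg_right hcp (Real.rpow_nonneg (hfnn y) _)
      _ ≤ slopeE f y := H p y hdyp
  -- a positive lower bound for f on the "middle" region
  obtain ⟨μ, hμpos, hμK⟩ : ∃ μ > (0:ℝ), ∀ y, ‖y‖ ≤ R → ε₀ ≤ Metric.infDist y S → μ ≤ f y := by
    set K : Set (EuclideanSpace ℝ (Fin d)) :=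
      Metric.closedBall 0 R ∩ (fun y => Metric.infDist y S) ⁻¹' Set.Ici ε₀ with hK
    have hKclosed : IsClosed K :=
      Metric.isClosed_closedBall.inter (isClosed_Ici.preimage (Metric.continuous_infDist_pt S))
    have hKcompact : IsCompact K :=
      (isCompact_closedBall 0 R).of_isClosed_subset hKclosed Set.inter_subset_left
    rcases Set.eq_empty_or_nonempty K with hKe | hKne
    · refine ⟨1, one_pos, fun y hy1 hy2 => ?_⟩
      exfalso
      have : y ∈ K := ⟨by rwa [Metric.mem_closedBall, dist_zero_right], hy2⟩
      rw [hKe] at this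
      exact this
    · obtain ⟨z₀, hz₀K, hz₀min⟩ := lsc_min_on_compact hlsc hKcompact hKne (fun w _ => hfnn w)
      refine ⟨f z₀, ?_, fun y hy1 hy2 => hz₀min y ⟨by rwa [Metric.mem_closedBall, dist_zero_right], hy2⟩⟩
      rcases lt_or_eq_of_le (hfnn z₀) with h | h
      · exact h
      · exfalso
        have hz₀S : z₀ ∈ S := by rw [hS]; exact h.symm
        have : Metric.infDist z₀ S = 0 := Metric.infDist_zero_of_mem hz₀S
        have := hz₀K.2
        simp only [Set.mem_preimage, Set.mem_Ici] at this
        rw [Metric.infDist_zero_of_mem hz₀S] at this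
        linarith
  -- the combined Łojasiewicz inequality on {0 < f < μ}
  set B : ℝ := max μ 1 with hB
  have hBpos : (0:ℝ) < B := lt_of_lt_of_le one_pos (le_max_right _ _)
  set c₁ : ℝ := min c₀ (c / B^(1-τ)) with hc₁
  have hc₁pos : 0 < c₁ := by
    apply lt_min hc₀pos
    apply div_pos hc (Real.rpow_pos_of_pos hBpos _)
  have hslope : ∀ y, 0 < f y → f y < μ → c₁ * f y ^ (1-τ) ≤ slopeE f y := by
    intro y hy0 hyμ
    rcases le_or_gt R ‖y‖ with hyR | hyR
    · -- far : slope ≥ c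
      have hsl := hcoer' y hyR
      have h1 : f y ^ (1-τ) ≤ B^(1-τ) := by
        apply Real.rpow_le_rpow (hfnn y) ?_ (by linarith)
        calc f y ≤ μ := hyμ.le
          _ ≤ B := le_max_left _ _
      calc c₁ * f y ^ (1-τ) ≤ (c / B^(1-τ)) * f y ^ (1-τ) := by
            apply mul_le_mul_of_nonneg_right (min_le_right _ _) (Real.rpow_nonneg (hfnn y) _)
        _ ≤ (c / B^(1-τ)) * B^(1-τ) := by
            apply mul_le_mul_of_nonneg_left h1
            positivity
        _ = c := by
            field_simp
        _ ≤ slopeE f y := hsl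
    · -- near S
      have hnear : Metric.infDist y S < ε₀ := by
        by_contra hcon
        push_neg at hcon
        have := hμK y hyR.le hcon
        linarith
      calc c₁ * f y ^ (1-τ) ≤ c₀ * f y ^ (1-τ) := by
            apply mul_le_mul_of_nonneg_right (min_le_left _ _) (Real.rpow_nonneg (hfnn y) _)
        _ ≤ slopeE f y := hunif y hnear
  -- constants for the final bound
  set q : ℝ := (2:ℝ)^(-τ) with hq
  have hq0 : 0 < q := Real.rpow_pos_of_pos (by norm_num) _
  have hq1 : q < 1 := Real.rpow_lt_one_of_one_lt_of_neg (by norm_num) (by linarith)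
  set K' : ℝ := 2 * q / (c₁ * (1 - q)) with hK'
  have hK'pos : 0 < K' := by
    apply div_pos (by linarith)
    apply mul_pos hc₁pos (by linarith)
  set A : ℝ := 2*R/μ + 1/c with hA
  have hApos : 0 < A := by positivity
  -- the far linear bound
  obtain ⟨s₀, hs₀⟩ := hSne
  have hs₀R : ‖s₀‖ ≤ R := by
    have := hSsub hs₀
    rwa [Metric.mem_closedBall, dist_zero_right] at this
  have hfar : ∀ x, Metric.infDist x S ≤ 2*R + f x / c ∨ Metric.infDist x S ≤ f x / c := by
    intro x
    rcases lt_or_ge (f x) (c * (‖x‖ - R)) with hcase | hcase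
    · right
      have hxR : R < ‖x‖ := by
        have h0 := hfnn x
        by_contra hcon
        push_neg at hcon
        nlinarith
      set r : ℝ := (f x / c + (‖x‖ - R))/2 with hr
      have h1 : f x / c < ‖x‖ - R := by
        rw [div_lt_iff₀ hc]
        linarith [mul_comm c (‖x‖ - R)]
      have h2 : f x - 0 < c * r := by
        have hfr : f x / c < r := by rw [hr]; linarith
        rw [sub_zero]
        calc f x = c * (f x / c) := by field_simp
          _ < c * r := by exact mul_lt_mul_of_pos_left hfr hc
      obtain ⟨z, hz1, hz2⟩ := descent hfnn hlsc x c 0 r hc le_rfl h2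
        (by
          intro y hy hy1 _
          apply hcoer'
          have h3 : r < ‖x‖ - R := by rw [hr]; linarith
          have h4 : ‖x‖ ≤ ‖x - y‖ + ‖y‖ := by
            calc ‖x‖ = ‖(x - y) + y‖ := by rw [sub_add_cancel]
              _ ≤ ‖x - y‖ + ‖y‖ := norm_add_le _ _
          have h5 : ‖x - y‖ = dist y x := by rw [dist_eq_norm, norm_sub_rev]
          linarith)
      have hzS : z ∈ S := by
        rw [hS]
        exact le_antisymm hz1 (hfnn z)
      calc Metric.infDist x S ≤ dist x z := Metric.infDist_le_dist_of_mem hzS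
        _ = dist z x := dist_comm x z
        _ ≤ f x / c := hz2
    · left
      have hxb : ‖x‖ ≤ R + f x / c := by
        rcases le_or_gt ‖x‖ R with h | h
        · have : 0 ≤ f x / c := div_nonneg (hfnn x) hc.le
          linarith
        · have : ‖x‖ - R ≤ f x / c := by
            rw [le_div_iff₀ hc]
            nlinarith
          linarith
      calc Metric.infDist x S ≤ dist x s₀ := Metric.infDist_le_dist_of_mem hs₀
        _ ≤ ‖x‖ + ‖s₀‖ := by
            rw [dist_eq_norm]
            exact norm_sub_le _ _
        _ ≤ 2*R + f x / c := by linarith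
  -- final constant
  set A' : ℝ := max A 1 with hA'
  have hA'pos : 0 < A' := lt_of_lt_of_le one_pos (le_max_right _ _)
  refine ⟨min (1/K') (1/A'), lt_min (one_div_pos.mpr hK'pos) (one_div_pos.mpr hA'pos), fun x => ?_⟩
  set C : ℝ := min (1/K') (1/A') with hC
  have hCpos : 0 < C := lt_min (one_div_pos.mpr hK'pos) (one_div_pos.mpr hA'pos)
  have hdnn : 0 ≤ Metric.infDist x S := Metric.infDist_nonneg
  rcases lt_or_eq_of_le (hfnn x) with hx0 | hx0
  · rcases lt_or_ge (f x) μ with hxμ | hxμ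
    · -- Hölder regime
      have hhb := holder_bound hfnn hlsc S hS c₁ μ τ hc₁pos hμpos hτ0 hτ1 hslope x hx0 hxμ
      rw [← hq, ← hK'] at hhb
      have h1 : C * Metric.infDist x S ≤ (1/K') * (K' * f x ^ τ) :=
        mul_le_mul (min_le_left _ _) hhb hdnn (one_div_pos.mpr hK'pos).le
      have h2 : (1/K') * (K' * f x ^ τ) = f x ^ τ := by
        field_simp
      linarith [hfnn x, h1, h2.le]
    · -- far regime : f x ≥ μ
      have hlin : Metric.infDist x S ≤ A' * f x := by
        rcases hfar x with h | h
        · have h2R : 2*R ≤ (2*R/μ) * f x := by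
            rw [div_mul_eq_mul_div, le_div_iff₀ hμpos]
            nlinarith
          have h1c : f x / c = (1/c) * f x := by ring
          have hAA' : A ≤ A' := le_max_left _ _
          have : Metric.infDist x S ≤ A * f x := by
            rw [hA]
            calc Metric.infDist x S ≤ 2*R + f x / c := h
              _ = 2*R + (1/c) * f x := by rw [h1c]
              _ ≤ (2*R/μ) * f x + (1/c) * f x := by linarith
              _ = (2*R/μ + 1/c) * f x := by ring
          calc Metric.infDist x S ≤ A * f x := this
            _ ≤ A' * f x := by
                apply mul_le_mul_of_nonneg_right (le_max_left _ _) (hfnn x)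
        · calc Metric.infDist x S ≤ f x / c := h
            _ = (1/c) * f x := by ring
            _ ≤ A * f x := by
                apply mul_le_mul_of_nonneg_right ?_ (hfnn x)
                rw [hA]
                have : 0 ≤ 2*R/μ := by positivity
                linarith
            _ ≤ A' * f x := by
                apply mul_le_mul_of_nonneg_right (le_max_left _ _) (hfnn x)
      have h1 : C * Metric.infDist x S ≤ (1/A') * (A' * f x) := by
        apply mul_le_mul (min_le_right _ _) hlin hdnn (one_div_pos.mpr hA'pos).le
      have h2 : (1/A') * (A' * f x) = f x := by field_simp
      have h3 : 0 ≤ f x ^ τ := Real.rpow_nonneg (hfnn x) _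
      linarith
  · -- f x = 0
    have hxS : x ∈ S := by rw [hS]; exact hx0.symm
    rw [Metric.infDist_zero_of_mem hxS, mul_zero, ← hx0]
    rw [Real.zero_rpow hτ0.ne']
    norm_num

end RankEB
end
end
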